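/- Let W_0 → … → W_t be a reduced computation of the S-machine M2 with base Q_{i,ℓ} Q_{i,r} (a history sector) and history H. Assume all tape letters of W_0 belong to only one of the alphabets X_{i,ℓ} or X_{i,r}. Then ||H|| ≤ |W_t|_Y and |W_0|_Y ≤ |W_t|_Y. -/

import Mathlib

namespace SM

/-- The hardware of an `S`-machine: a set `Q` of state letters, each belonging to a part
(the parts of the standard base are indexed by integer positions, `part q` being the
position of the part containing `q`), and a set `A` of tape letters, each belonging to
the alphabet of one sector (`sec y = i` means that `y` is a tape letter of the sector
lying between the parts in positions `i` and `i + 1`). -/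
structure Hardware where
  Q : Type
  A : Type
  part : Q → ℤ
  sec : A → ℤ

/-- An admissible word with `k + 1` state letters: `st i` is the `i`-th (signed) state
letter and `w i` is the (reduced) tape word between the `i`-th and `(i+1)`-st state
letters. -/
structure Conf (h : Hardware) (k : ℕ) where
  st : Fin (k + 1) → h.Q × Bool
  w : Fin k → FreeGroup h.A

/-- A rule of an `S`-machine: the part in position `p` has the component
`src p → (a p) (tgt p) (b p)`, and `allow` is the set `Y(θ)` of tape letters allowed in
the admissible words of its domain. -/
structure Rule (h : Hardware) where
  src : ℤ → h.Q
  tgt : ℤ → h.Q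
  a : ℤ → FreeGroup h.A
  b : ℤ → FreeGroup h.A
  allow : h.A → Prop

/-- the index of the sector lying immediately to the right of a signed state letter -/
def rightSec (h : Hardware) (x : h.Q × Bool) : ℤ :=
  if x.2 then h.part x.1 else h.part x.1 - 1

/-- the condition on two consecutive (signed) state letters of an admissible word -/
def adj (h : Hardware) (x x' : h.Q × Bool) : Prop :=
  (x'.2 = x.2 ∧
    h.part x'.1 = (if x.2 then h.part x.1 + 1 else h.part x.1 - 1)) ∨
  x' = (x.1, !x.2)

/-- `W` is an admissible word: consecutive state letters obey the adjacency conditions,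
every tape letter lies in the alphabet of its sector, and the word is reduced. -/
def Admissible (h : Hardware) [DecidableEq h.A] {k : ℕ} (W : Conf h k) : Prop :=
  (∀ i : Fin k, adj h (W.st i.castSucc) (W.st i.succ)) ∧
  (∀ i : Fin k, ∀ l ∈ (W.w i).toWord, h.sec l.1 = rightSec h (W.st i.castSucc)) ∧
  (∀ i : Fin k, W.st i.succ = ((W.st i.castSucc).1, !(W.st i.castSucc).2) →
    W.w i ≠ 1)

variable {h : Hardware}

/-- the word contributed by a rule immediately to the right of a signed state letter -/
def Rmul (θ : Rule h) (x : h.Q × Bool) : FreeGroup h.A :=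
  if x.2 then θ.b (h.part x.1) else (θ.a (h.part x.1))⁻¹

/-- the word contributed by a rule immediately to the left of a signed state letter -/
def Lmul (θ : Rule h) (x : h.Q × Bool) : FreeGroup h.A :=
  if x.2 then θ.a (h.part x.1) else (θ.b (h.part x.1))⁻¹

/-- One application of a rule `θ` to an admissible word `W`, producing `W'`: all state
letters of `W` are source letters of `θ`, all tape letters of `W` are allowed by `θ`,
each state letter is replaced as prescribed by `θ`, and the tape words are multiplied by
the corresponding words (with free reduction, which is automatic in the free group, and
trimming of the first and last tape letters, which is built into the sector
representation). -/
def Apply [DecidableEq h.A] (θ : Rule h) {k : ℕ} (W W' : Conf h k) : Prop :=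
  (∀ i, (W.st i).1 = θ.src (h.part (W.st i).1)) ∧
  (∀ i, W'.st i = (θ.tgt (h.part (W.st i).1), (W.st i).2)) ∧
  (∀ i : Fin k, ∀ l ∈ (W.w i).toWord, θ.allow l.1) ∧
  (∀ i : Fin k, W'.w i = Rmul θ (W.st i.castSucc) * W.w i * Lmul θ (W.st i.succ))

/-- the `Y`-length `|W|_Y` of an admissible word: the number of its tape letters -/
def lenY [DecidableEq h.A] {k : ℕ} (W : Conf h k) : ℕ :=
  ∑ i : Fin k, (W.w i).toWord.length

end SM

namespace M2

/-- tape letters of `M₂`: `Sum.inl y` is a letter of one of the working alphabets `Y_i`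
of `M₁`, and `Sum.inr (i, θ, s)` is the copy of the positive rule `θ` of `M₁` in the
history alphabet `X_{i,ℓ}` (if `s = false`) or `X_{i,r}` (if `s = true`). -/
abbrev A2 (Y Θ : Type) := Y ⊕ (ℤ × Θ × Bool)

/-- The hardware of the `S`-machine `M₂` built from an `S`-machine `M₁` with standard
base `Q_0 Q_1 … Q_n`, state letters `Q` (`partQ q` is the index of the part of `q`),
tape letters `Y` (`secY y = i` means `y ∈ Y_{i+1}`, the alphabet of the sector
`Q_i Q_{i+1}`), and positive rules `Θ`.  The state letter `(q, true)` is the copy of `q`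
in `Q_{i,r}` (position `2i`) and `(q, false)` is its copy in `Q_{i,ℓ}` (position
`2i − 1`); the history sector `Q_{i,ℓ} Q_{i,r}` (positions `2i − 1`, `2i`) has alphabet
`X_i = X_{i,ℓ} ⊔ X_{i,r}`, `1 ≤ i ≤ n − 1`, and the working sector
`Q_{i,r} Q_{i+1,ℓ}` has alphabet `Y_{i+1}`. -/
@[reducible] def hw (Q Y Θ : Type) (partQ : Q → ℤ) (secY : Y → ℤ) (n : ℕ) : SM.Hardware where
  Q := Q × Bool
  A := A2 Y Θ
  part := fun x => if x.2 then 2 * partQ x.1 else 2 * partQ x.1 - 1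
  sec := fun l =>
    match l with
    | Sum.inl y => 2 * secY y
    | Sum.inr z => if 1 ≤ z.1 ∧ z.1 ≤ (n : ℤ) - 1 then 2 * z.1 - 1 else -3

variable {Q Y Θ : Type}

/-- the state letters of a rule of `M₂` obtained from the assignment `q : ℤ → Q` of
state letters of a rule of `M₁` -/
def q2 (q : Θ → ℤ → Q) (θ : Θ) : ℤ → Q × Bool := fun p =>
  if p % 2 = 0 then (q θ (p / 2), true) else (q θ ((p + 1) / 2), false)

/-- the left words of the positive rule `θ_h` of `M₂`: the part of `θ_h` at `Q_{i,r}` is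
`q_{i,r} → h̄_{θ,i} q'_{i,r} b_i` and the part at `Q_{i,ℓ}` is
`q_{i,ℓ} → a_i q'_{i,ℓ} h_{θ,i}⁻¹` -/
def posA (wa : Θ → ℤ → FreeGroup Y) (n : ℕ) (θ : Θ) : ℤ → FreeGroup (A2 Y Θ) :=
  fun p =>
    if p % 2 = 0 then
      (if 1 ≤ p / 2 ∧ p / 2 ≤ (n : ℤ) - 1 then
        FreeGroup.of (Sum.inr (p / 2, θ, true)) else 1)
    else FreeGroup.map Sum.inl (wa θ ((p + 1) / 2))

/-- the right words of the positive rule `θ_h` of `M₂` -/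
def posB (wb : Θ → ℤ → FreeGroup Y) (n : ℕ) (θ : Θ) : ℤ → FreeGroup (A2 Y Θ) :=
  fun p =>
    if p % 2 = 0 then FreeGroup.map Sum.inl (wb θ (p / 2))
    else
      (if 1 ≤ (p + 1) / 2 ∧ (p + 1) / 2 ≤ (n : ℤ) - 1 then
        (FreeGroup.of (Sum.inr ((p + 1) / 2, θ, false)))⁻¹ else 1)

/-- The rules of `M₂`: for every positive rule `θ` of `M₁` (with components
`q_i → (wa θ i) q_i' (wb θ i)`, source letters `src θ i` and target letters `tgt θ i`),
`M₂` has the rule `θ_h = (θ, true)` and its inverse `(θ, false)`; `Y_j(θ_h) = Y_j` for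
every `j` (no tape letters are forbidden). -/
def rule2 (partQ : Q → ℤ) (secY : Y → ℤ) (n : ℕ) (src tgt : Θ → ℤ → Q)
    (wa wb : Θ → ℤ → FreeGroup Y) :
    Θ × Bool → SM.Rule (hw Q Y Θ partQ secY n) := fun r =>
  if r.2 then
    { src := q2 src r.1, tgt := q2 tgt r.1,
      a := posA wa n r.1, b := posB wb n r.1, allow := fun _ => True }
  else
    { src := q2 tgt r.1, tgt := q2 src r.1,
      a := fun p => (posA wa n r.1 p)⁻¹, b := fun p => (posB wb n r.1 p)⁻¹,
      allow := fun _ => True }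

end M2


set_option linter.unusedSectionVars false
namespace SMaux
open FreeGroup

variable {α : Type} [DecidableEq α]

/-- non-cancelling relation between consecutive letters -/
def nc (p q : α × Bool) : Prop := ¬(p.1 = q.1 ∧ p.2 = !q.2)

lemma reduce_eq_self_of_chain' : ∀ {L : List (α × Bool)}, List.Chain' nc L → reduce L = L := by
  intro L
  induction L with
  | nil => intro _; rfl
  | cons x L ih =>
    intro h
    rw [List.Chain', List.isChain_cons] at h
    rw [reduce.cons, ih h.2]
    cases hL : L with
    | nil => rfl
    | cons hd tl =>
      have := h.1 hd (by rw [hL]; rfl)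
      simp only [nc] at this
      show (if x.1 = hd.1 ∧ x.2 = !hd.2 then tl else x :: hd :: tl) = x :: hd :: tl
      rw [if_neg this]

lemma chain'_of_reduce_eq : ∀ {L : List (α × Bool)}, reduce L = L → List.Chain' nc L := by
  intro L
  induction L with
  | nil => intro _; exact List.isChain_nil
  | cons x L ih =>
    intro h
    rw [reduce.cons] at h
    have hsub : (reduce L).length ≤ L.length := (Red.sublist reduce.red).length_le
    cases hL : reduce L with
    | nil =>
      rw [hL] at h
      have : L = [] := by injection h with h1 h2; exact h2.symm
      subst this; exact List.isChain_singleton x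
    | cons hd tl =>
      rw [hL] at h hsub
      replace h : (if x.1 = hd.1 ∧ x.2 = !hd.2 then tl else x :: hd :: tl) = x :: L := h
      by_cases hc : x.1 = hd.1 ∧ x.2 = !hd.2
      · rw [if_pos hc] at h
        have := congrArg List.length h
        simp at this hsub
        omega
      · rw [if_neg hc] at h
        have hL' : L = hd :: tl := by injection h with h1 h2; exact h2.symm
        have : reduce L = L := by rw [hL, hL']
        rw [hL']
        refine List.isChain_cons_cons.mpr ⟨hc, ?_⟩
        rw [← hL']
        exact ih this
lemma chain'_toWord (x : FreeGroup α) : List.Chain' nc x.toWord :=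
  chain'_of_reduce_eq (reduce_toWord x)

lemma mul_toWord_eq (x y : FreeGroup α) (h : List.Chain' nc (x.toWord ++ y.toWord)) :
    (x * y).toWord = x.toWord ++ y.toWord := by
  conv_lhs => rw [← mk_toWord (x := x), ← mk_toWord (x := y), mul_mk]
  rw [toWord_mk, reduce_eq_self_of_chain' h]

lemma len_mul_le (x y : FreeGroup α) :
    (x * y).toWord.length ≤ x.toWord.length + y.toWord.length :=
  norm_mul_le x y

lemma toWord_mk_single (a : α) (b : Bool) : (mk [(a, b)]).toWord = [(a, b)] := by
  rw [toWord_mk, reduce_singleton]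

lemma inv_mk_single (a : α) (b : Bool) : (mk [(a, b)])⁻¹ = mk [(a, !b)] := by
  rw [inv_mk]; rfl


lemma chainR (t : ℕ) (r : ℕ → α) (eR : ℕ → Bool)
    (hnc : ∀ j, j + 1 < t → ¬(r j = r (j + 1) ∧ eR j = !eR (j + 1))) :
    ∀ j, j ≤ t → List.Chain' nc ((List.range j).map (fun k => ((r k, eR k) : α × Bool))) := by
  intro j hj
  rw [List.Chain', List.isChain_map]
  cases j with
  | zero => simp
  | succ m =>
    rw [List.isChain_range_succ]
    intro k hk
    exact hnc k (by omega)

lemma core (t : ℕ) (w : ℕ → FreeGroup α) (l r : ℕ → α) (eL eR : ℕ → Bool) (P : α → Prop)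
    (hPl : ∀ j, j < t → P (l j)) (hPr : ∀ j, j < t → ¬ P (r j))
    (hw0 : ∀ p ∈ (w 0).toWord, P p.1)
    (hstep : ∀ j, j < t → w (j + 1) = mk [(l j, eL j)] * w j * mk [(r j, eR j)])
    (hnc : ∀ j, j + 1 < t → ¬(r j = r (j + 1) ∧ eR j = !eR (j + 1))) :
    t ≤ (w t).toWord.length ∧ (w 0).toWord.length ≤ (w t).toWord.length := by
  set f : ℕ → α × Bool := fun k => (r k, eR k) with hf
  have main : ∀ j, j ≤ t → ∃ u R : FreeGroup α, w j = u * R ∧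
      (∀ p ∈ u.toWord, P p.1) ∧ R.toWord = (List.range j).map f ∧
      (w 0).toWord.length ≤ u.toWord.length + j := by
    intro j
    induction j with
    | zero =>
      intro _
      exact ⟨w 0, 1, by rw [mul_one], hw0, by simp, by simp⟩
    | succ m ih =>
      intro hm
      obtain ⟨u, R, hw, hu, hR, hlen⟩ := ih (by omega)
      have hmt : m < t := by omega
      refine ⟨mk [(l m, eL m)] * u, R * mk [(r m, eR m)], ?_, ?_, ?_, ?_⟩
      · rw [hstep m hmt, hw, mul_assoc, mul_assoc, mul_assoc]
      · intro p hp
        have := (toWord_mul_sublist (mk [(l m, eL m)]) u).subset hp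
        rw [toWord_mk_single] at this
        rcases List.mem_append.mp this with h1 | h2
        · have : p = (l m, eL m) := List.mem_singleton.mp h1
          rw [this]; exact hPl m hmt
        · exact hu p h2
      · have hch : List.Chain' nc (R.toWord ++ (mk [(r m, eR m)] : FreeGroup α).toWord) := by
          rw [toWord_mk_single, hR]
          have := chainR t r eR hnc (m + 1) hm
          rw [List.range_succ, List.map_append] at this
          simpa [f] using this
        rw [mul_toWord_eq _ _ hch, toWord_mk_single, hR, List.range_succ, List.map_append]
        simp [f]
      · have : u.toWord.length ≤ ((mk [(l m, eL m)] : FreeGroup α) * u).toWord.length + 1 := by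
          have h1 : u = (mk [(l m, eL m)])⁻¹ * (mk [(l m, eL m)] * u) := by group
          calc u.toWord.length
              = ((mk [(l m, eL m)] : FreeGroup α)⁻¹ * (mk [(l m, eL m)] * u)).toWord.length := by
                rw [← h1]
            _ ≤ ((mk [(l m, eL m)] : FreeGroup α)⁻¹).toWord.length
                  + ((mk [(l m, eL m)] : FreeGroup α) * u).toWord.length := len_mul_le _ _
            _ = ((mk [(l m, eL m)] : FreeGroup α) * u).toWord.length + 1 := by
                rw [inv_mk_single, toWord_mk_single]; simp [add_comm]
        omega
  obtain ⟨u, R, hw, hu, hR, hlen⟩ := main t le_rfl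
  have hfin : (w t).toWord = u.toWord ++ R.toWord := by
    rw [hw]
    apply mul_toWord_eq
    apply List.isChain_append.mpr
    refine ⟨chain'_toWord u, chain'_toWord R, ?_⟩
    intro x hx y hy
    have hxm : x ∈ u.toWord := List.mem_of_mem_getLast? hx
    have hym : y ∈ R.toWord := List.mem_of_mem_head? hy
    rw [hR] at hym
    obtain ⟨k, hk, hfk⟩ := List.mem_map.mp hym
    have hkt : k < t := List.mem_range.mp hk
    intro hcon
    apply hPr k hkt
    have : x.1 = y.1 := hcon.1
    rw [← hfk] at this
    have : x.1 = r k := this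
    rw [← this]
    exact hu x hxm
  rw [hfin]
  rw [hR]
  simp only [List.length_append, List.length_map, List.length_range]
  omega

end SMaux


open SM M2 in
/-- Lemma `w`: let `W₀ → … → W_t` be a reduced computation of `M₂` with base
`Q_{i,ℓ} Q_{i,r}` (a history sector) and history `H`, such that all tape letters of `W₀`
belong to only one of the alphabets `X_{i,ℓ}` or `X_{i,r}`.  Then `‖H‖ ≤ |W_t|_Y` and
`|W₀|_Y ≤ |W_t|_Y`.  The machine `M₁` is given by its standard base `Q_0 … Q_n`, state
letters `Q`, tape letters `Y` and positive rules `Θ`, and satisfies property (**). -/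
theorem m2_history_sector_growth
    (Q Y Θ : Type) [DecidableEq Y] [DecidableEq Θ]
    (n : ℕ) (partQ : Q → ℤ) (secY : Y → ℤ)
    (src tgt : Θ → ℤ → Q) (wa wb : Θ → ℤ → FreeGroup Y)
    -- `M₁` is an `S`-machine with the standard base `Q_0 … Q_n`:
    (hn : 1 ≤ n)
    (hpart : ∀ q, 0 ≤ partQ q ∧ partQ q ≤ (n : ℤ))
    (hsecY : ∀ y, 0 ≤ secY y ∧ secY y ≤ (n : ℤ) - 1)
    (hsrc : ∀ θ p, 0 ≤ p → p ≤ (n : ℤ) → partQ (src θ p) = p)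
    (htgt : ∀ θ p, 0 ≤ p → p ≤ (n : ℤ) → partQ (tgt θ p) = p)
    (hwa : ∀ θ p, ∀ l ∈ (wa θ p).toWord, secY l.1 = p - 1)
    (hwb : ∀ θ p, ∀ l ∈ (wb θ p).toWord, secY l.1 = p)
    -- property (**) of `M₁`:
    (hstar : ∀ θ : Θ, ∃ p0 : ℤ, (∀ p, p ≠ p0 → wa θ p = 1 ∧ wb θ p = 1) ∧
      (wa θ p0).toWord.length + (wb θ p0).toWord.length ≤ 1)
    -- a reduced computation of `M₂` consisting of admissible words:
    (t : ℕ) (W : Fin (t + 1) → SM.Conf (hw Q Y Θ partQ secY n) 1)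
    (hist : Fin t → Θ × Bool)
    (hstep : ∀ i : Fin t,
      SM.Apply (rule2 partQ secY n src tgt wa wb (hist i)) (W i.castSucc) (W i.succ))
    (hadm : ∀ i, SM.Admissible (hw Q Y Θ partQ secY n) (W i))
    (hred : ∀ (i : ℕ) (hi : i + 1 < t),
      hist ⟨i + 1, hi⟩ ≠ ((hist ⟨i, by omega⟩).1, !(hist ⟨i, by omega⟩).2))
    -- the base is the history sector `Q_{i₀,ℓ} Q_{i₀,r}`:
    (i0 : ℤ) (hi0 : 1 ≤ i0 ∧ i0 ≤ (n : ℤ) - 1)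
    (hbase : ((W 0).st 0).2 = true ∧ ((W 0).st 1).2 = true ∧
      ((W 0).st 0).1.2 = false ∧ ((W 0).st 1).1.2 = true ∧
      partQ ((W 0).st 0).1.1 = i0 ∧ partQ ((W 0).st 1).1.1 = i0)
    -- all tape letters of `W₀` belong to only one of `X_{i₀,ℓ}`, `X_{i₀,r}`:
    (hside :
      (∀ l ∈ ((W 0).w 0).toWord, ∃ θ : Θ, l.1 = Sum.inr (i0, θ, false)) ∨
      (∀ l ∈ ((W 0).w 0).toWord, ∃ θ : Θ, l.1 = Sum.inr (i0, θ, true))) :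
    t ≤ ((W (Fin.last t)).w 0).toWord.length ∧
    ((W 0).w 0).toWord.length ≤ ((W (Fin.last t)).w 0).toWord.length := by
  classical
  rcases Nat.eq_zero_or_pos t with ht0 | htpos
  · subst ht0
    have : Fin.last 0 = (0 : Fin 1) := rfl
    rw [this]
    exact ⟨Nat.zero_le _, le_rfl⟩
  have hio : (0:ℤ) ≤ i0 ∧ i0 ≤ (n:ℤ) := ⟨by omega, by omega⟩
  have hm0 : ¬((2*i0 - 1) % 2 = 0) := by omega
  have hd0 : (2*i0 - 1 + 1)/2 = i0 := by omega
  have hm1 : (2*i0) % 2 = 0 := by omega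
  have hd1 : (2*i0)/2 = i0 := by omega
  -- state invariant: signs and parts of the two state letters are constant
  have key : ∀ j : Fin (t+1),
      ((W j).st 0).2 = true ∧ ((W j).st 1).2 = true ∧
      ((W j).st 0).1.2 = false ∧ ((W j).st 1).1.2 = true ∧
      partQ ((W j).st 0).1.1 = i0 ∧ partQ ((W j).st 1).1.1 = i0 := by
    intro j
    induction j using Fin.induction with
    | zero => exact hbase
    | succ i ih =>
      obtain ⟨s0, s1, b0, b1, p0, p1⟩ := ih
      have h0 := (hstep i).2.1 0
      have h1 := (hstep i).2.1 1
      have e0 : (hw Q Y Θ partQ secY n).part ((W i.castSucc).st 0).1 = 2*i0 - 1 := by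
        simp [hw, b0, p0]
      have e1 : (hw Q Y Θ partQ secY n).part ((W i.castSucc).st 1).1 = 2*i0 := by
        simp [hw, b1, p1]
      rw [e0] at h0
      rw [e1] at h1
      cases hb : (hist i).2 <;>
        simp only [rule2, hb, if_true, if_false, Bool.false_eq_true, q2, hm0, hd0, hm1, hd1,
          if_pos, if_neg, ite_true, ite_false] at h0 h1 <;>
        rw [h0, h1] <;>
        exact ⟨s0, s1, rfl, rfl, by
          first
            | exact htgt _ _ hio.1 hio.2
            | exact hsrc _ _ hio.1 hio.2, by
          first
            | exact htgt _ _ hio.1 hio.2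
            | exact hsrc _ _ hio.1 hio.2⟩
  have hof : ∀ x : A2 Y Θ, FreeGroup.of x = FreeGroup.mk [(x, true)] := fun x => by
    rw [FreeGroup.of]
  have hofinv : ∀ x : A2 Y Θ, (FreeGroup.of x)⁻¹ = FreeGroup.mk [(x, false)] := fun x => by
    rw [hof x, SMaux.inv_mk_single, Bool.not_true]
  -- the recurrence for the tape word
  have hwrec : ∀ i : Fin t, (W i.succ).w 0 =
      FreeGroup.mk [((Sum.inr (i0, (hist i).1, false) : A2 Y Θ), !(hist i).2)] *
        (W i.castSucc).w 0 *
      FreeGroup.mk [((Sum.inr (i0, (hist i).1, true) : A2 Y Θ), (hist i).2)] := by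
    intro i
    obtain ⟨s0, s1, b0, b1, p0, p1⟩ := key i.castSucc
    have h := (hstep i).2.2.2 0
    have hc : (0 : Fin 1).castSucc = (0 : Fin 2) := rfl
    have hs : (0 : Fin 1).succ = (1 : Fin 2) := rfl
    rw [hc, hs] at h
    rw [h]
    cases hb : (hist i).2 <;>
      simp only [SM.Rmul, SM.Lmul, s0, s1, b0, b1, p0, p1, hw, rule2, hb,
        Bool.not_true, Bool.not_false, if_true, if_false, Bool.false_eq_true,
        posB, posA, hm0, hm1, hd0, hd1, ite_true, ite_false,
        hi0.1, hi0.2, and_self, inv_inv, hof, hofinv, SMaux.inv_mk_single]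
  -- ℕ-indexed versions
  let hist' : ℕ → Θ × Bool := fun j => hist ⟨min j (t-1), by omega⟩
  let w' : ℕ → FreeGroup (A2 Y Θ) := fun j => (W ⟨min j t, by omega⟩).w 0
  have hist_eq : ∀ (j : ℕ) (hj : j < t), hist' j = hist ⟨j, hj⟩ := fun j hj =>
    congrArg hist (Fin.ext (by show min j (t-1) = j; omega))
  have w0eq : w' 0 = (W 0).w 0 := by
    show (W ⟨min 0 t, by omega⟩).w 0 = (W 0).w 0
    have e : (⟨min 0 t, by omega⟩ : Fin (t+1)) = 0 := by
      refine Fin.ext ?_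
      show min 0 t = (0 : Fin (t+1)).val
      simp
    rw [e]
  have wteq : w' t = (W (Fin.last t)).w 0 := by
    show (W ⟨min t t, by omega⟩).w 0 = (W (Fin.last t)).w 0
    have e : (⟨min t t, by omega⟩ : Fin (t+1)) = Fin.last t := by
      refine Fin.ext ?_
      show min t t = (Fin.last t).val
      simp [Fin.last]
    rw [e]
  have hstep' : ∀ j, j < t →
      w' (j+1) = FreeGroup.mk [((Sum.inr (i0, (hist' j).1, false) : A2 Y Θ), !(hist' j).2)] *
        w' j * FreeGroup.mk [((Sum.inr (i0, (hist' j).1, true) : A2 Y Θ), (hist' j).2)] := by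
    intro j hj
    have h := hwrec ⟨j, hj⟩
    have ew1 : w' (j+1) = (W (⟨j, hj⟩ : Fin t).succ).w 0 := by
      show (W ⟨min (j+1) t, by omega⟩).w 0 = _
      have e : (⟨min (j+1) t, by omega⟩ : Fin (t+1)) = (⟨j, hj⟩ : Fin t).succ := by
        refine Fin.ext ?_
        show min (j+1) t = ((⟨j, hj⟩ : Fin t).succ).val
        simp only [Fin.val_succ]
        omega
      rw [e]
    have ew0 : w' j = (W (⟨j, hj⟩ : Fin t).castSucc).w 0 := by
      show (W ⟨min j t, by omega⟩).w 0 = _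
      have e : (⟨min j t, by omega⟩ : Fin (t+1)) = (⟨j, hj⟩ : Fin t).castSucc := by
        refine Fin.ext ?_
        show min j t = ((⟨j, hj⟩ : Fin t).castSucc).val
        simp only [Fin.coe_castSucc]
        omega
      rw [e]
    rw [ew1, ew0, h, hist_eq j hj]
  have hnc0 : ∀ j, j + 1 < t → ¬((hist' j).1 = (hist' (j+1)).1 ∧ (hist' j).2 = !(hist' (j+1)).2) := by
    intro j hj hcon
    apply hred j hj
    rw [← hist_eq j (by omega), ← hist_eq (j+1) hj]
    refine Prod.ext hcon.1.symm ?_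
    rw [hcon.2]
    simp
  rcases hside with hsd | hsd
  · -- all letters of W₀ in X_{i₀,ℓ}
    have main := SMaux.core t w'
      (fun j => (Sum.inr (i0, (hist' j).1, false) : A2 Y Θ))
      (fun j => (Sum.inr (i0, (hist' j).1, true) : A2 Y Θ))
      (fun j => !(hist' j).2) (fun j => (hist' j).2)
      (fun a => ∃ θ0 : Θ, a = Sum.inr (i0, θ0, false))
      (fun j _ => ⟨(hist' j).1, rfl⟩)
      (by rintro j hj ⟨θ0, hcon⟩; simp at hcon)
      (by rw [w0eq]; exact hsd)
      hstep'
      (by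
        intro j hj hcon
        apply hnc0 j hj
        obtain ⟨h1, h2⟩ := hcon
        simp only [Sum.inr.injEq, Prod.mk.injEq] at h1
        exact ⟨h1.2.1, h2⟩)
    rw [wteq, w0eq] at main
    exact main
  · -- all letters of W₀ in X_{i₀,r}: pass to inverses
    have main := SMaux.core t (fun j => (w' j)⁻¹)
      (fun j => (Sum.inr (i0, (hist' j).1, true) : A2 Y Θ))
      (fun j => (Sum.inr (i0, (hist' j).1, false) : A2 Y Θ))
      (fun j => !(hist' j).2) (fun j => !(!(hist' j).2))
      (fun a => ∃ θ0 : Θ, a = Sum.inr (i0, θ0, true))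
      (fun j _ => ⟨(hist' j).1, rfl⟩)
      (by rintro j hj ⟨θ0, hcon⟩; simp at hcon)
      (by
        intro p hp
        rw [FreeGroup.toWord_inv, FreeGroup.invRev] at hp
        rw [List.mem_reverse, List.mem_map] at hp
        obtain ⟨q, hq, hqp⟩ := hp
        rw [w0eq] at hq
        obtain ⟨θ0, hθ0⟩ := hsd q hq
        exact ⟨θ0, by rw [← hqp]; exact hθ0⟩)
      (by
        intro j hj
        show (w' (j+1))⁻¹ =
          FreeGroup.mk [((Sum.inr (i0, (hist' j).1, true) : A2 Y Θ), !(hist' j).2)] *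
            (w' j)⁻¹ *
          FreeGroup.mk [((Sum.inr (i0, (hist' j).1, false) : A2 Y Θ), !(!(hist' j).2))]
        rw [hstep' j hj, mul_inv_rev, mul_inv_rev, ← mul_assoc,
          SMaux.inv_mk_single, SMaux.inv_mk_single])
      (by
        intro j hj hcon
        apply hnc0 j hj
        obtain ⟨h1, h2⟩ := hcon
        simp only [Sum.inr.injEq, Prod.mk.injEq] at h1
        simp only [Bool.not_not] at h2
        exact ⟨h1.2.1, h2⟩)
    rw [FreeGroup.toWord_inv, FreeGroup.toWord_inv, FreeGroup.invRev_length,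
      FreeGroup.invRev_length, wteq, w0eq] at main
    exact main
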